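/- Let θ : ℝ → (0, π), φ, ω₃ : ℝ → ℝ be differentiable functions satisfying φ̈ = (ω₃θ̇/sin θ)·(I₃² + mR²I₃(1 - α cos θ))/(I₁I₃ + mR²I₁sin²θ + mR²I₃(α - cos θ)²) - 2φ̇θ̇ cos θ/sin θ and ω̇₃ = -ω₃θ̇ sin θ·(mR²I₃(α - cos θ) + mR²I₁cos θ)/(mR²I₃(α - cos θ)² + I₁I₃ + mR²I₁sin²θ). Then λ(t) = I₁φ̇ sin²θ - (α - cos θ)I₃ω₃ is constant in t. -/

import Mathlib

set_option maxHeartbeats 1000000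


theorem jellett_integral_conserved
    (m R I₁ I₃ α : ℝ) (hm : 0 < m) (hR : 0 < R) (hI₁ : 0 < I₁) (hI₃ : 0 < I₃)
    (hα : 0 < α) (hα1 : α < 1)
    (θ φ ω₃ θ' φ' : ℝ → ℝ)
    (hrange : ∀ t, θ t ∈ Set.Ioo 0 Real.pi)
    (hθ : ∀ t, HasDerivAt θ (θ' t) t)
    (hφ : ∀ t, HasDerivAt φ (φ' t) t)
    (hφ' : ∀ t, HasDerivAt φ'
      ((ω₃ t * θ' t / Real.sin (θ t)) *
        ((I₃ ^ 2 + m * R ^ 2 * I₃ * (1 - α * Real.cos (θ t))) /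
          (I₁ * I₃ + m * R ^ 2 * I₁ * Real.sin (θ t) ^ 2 +
            m * R ^ 2 * I₃ * (α - Real.cos (θ t)) ^ 2))
        - 2 * φ' t * θ' t * Real.cos (θ t) / Real.sin (θ t)) t)
    (hω : ∀ t, HasDerivAt ω₃
      (-(ω₃ t) * θ' t * Real.sin (θ t) *
        ((m * R ^ 2 * I₃ * (α - Real.cos (θ t)) + m * R ^ 2 * I₁ * Real.cos (θ t)) /
          (m * R ^ 2 * I₃ * (α - Real.cos (θ t)) ^ 2 + I₁ * I₃ +
            m * R ^ 2 * I₁ * Real.sin (θ t) ^ 2))) t) :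
    ∀ s t : ℝ,
      I₁ * φ' s * Real.sin (θ s) ^ 2 - (α - Real.cos (θ s)) * I₃ * ω₃ s
      = I₁ * φ' t * Real.sin (θ t) ^ 2 - (α - Real.cos (θ t)) * I₃ * ω₃ t := by
  set f : ℝ → ℝ := fun t =>
    I₁ * φ' t * Real.sin (θ t) ^ 2 - (α - Real.cos (θ t)) * I₃ * ω₃ t with hf
  have key : ∀ t, HasDerivAt f 0 t := by
    intro t
    have hsin : 0 < Real.sin (θ t) :=
      Real.sin_pos_of_pos_of_lt_pi (hrange t).1 (hrange t).2
    have hsne : Real.sin (θ t) ≠ 0 := ne_of_gt hsin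
    have hD : I₁ * I₃ + m * R ^ 2 * I₁ * Real.sin (θ t) ^ 2 +
        m * R ^ 2 * I₃ * (α - Real.cos (θ t)) ^ 2 > 0 := by positivity
    have hDne : I₁ * I₃ + m * R ^ 2 * I₁ * Real.sin (θ t) ^ 2 +
        m * R ^ 2 * I₃ * (α - Real.cos (θ t)) ^ 2 ≠ 0 := ne_of_gt hD
    have hDne' : m * R ^ 2 * I₃ * (α - Real.cos (θ t)) ^ 2 + I₁ * I₃ +
        m * R ^ 2 * I₁ * Real.sin (θ t) ^ 2 ≠ 0 := by
      intro h; apply hDne; linarith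
    have H := (((hφ' t).const_mul I₁).mul (((hθ t).sin).pow 2)).sub
      ((((hθ t).cos).const_sub α).mul_const I₃ |>.mul (hω t))
    convert H using 1
    case e'_4 => rfl
    case e'_5 => rfl
    case e'_8 => funext x; simp [hf]
    simp only [Pi.pow_apply]
    have hpyth : Real.sin (θ t) ^ 2 = 1 - Real.cos (θ t) ^ 2 := by
      have := Real.sin_sq_add_cos_sq (θ t); linarith
    set c := Real.cos (θ t) with hc
    set sn := Real.sin (θ t) with hsn2
    set w := ω₃ t
    set p := φ' t
    set d := θ' t
    clear_value c sn w p d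
    clear hf H hφ' hω hθ hφ hrange
    rw [show m * R ^ 2 * I₃ * (α - c) ^ 2 + I₁ * I₃ + m * R ^ 2 * I₁ * sn ^ 2
        = I₁ * I₃ + m * R ^ 2 * I₁ * sn ^ 2 + m * R ^ 2 * I₃ * (α - c) ^ 2 from by ring]
    have key2 : (I₁ * (I₃ ^ 2 + m * R ^ 2 * I₃ * (1 - α * c))
        + (α - c) * I₃ * (m * R ^ 2 * I₃ * (α - c) + m * R ^ 2 * I₁ * c)) /
        (I₁ * I₃ + m * R ^ 2 * I₁ * sn ^ 2 + m * R ^ 2 * I₃ * (α - c) ^ 2) = I₃ := by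
      rw [div_eq_iff hDne]
      linear_combination (-(m * R ^ 2 * I₁ * I₃)) * hpyth
    have hinv : sn * sn⁻¹ = 1 := mul_inv_cancel₀ hsne
    linear_combination (-(w * d * sn)) * key2 +
      (sn * ((w * d * I₃ * I₁ * m * R ^ 2 * α * c - w * d * I₃ * I₁ * m * R ^ 2
          - w * d * I₃ ^ 2 * I₁) *
          (I₁ * I₃ + m * R ^ 2 * I₁ * sn ^ 2 + m * R ^ 2 * I₃ * (α - c) ^ 2)⁻¹
        + 2 * d * I₁ * c * p)) * hinv
  intro s t
  have hdiff : Differentiable ℝ f := fun x => (key x).differentiableAt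
  have hconst : f s = f t :=
    is_const_of_deriv_eq_zero hdiff (fun x => (key x).deriv) s t
  simpa [hf] using hconst
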